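/- Let r = p^ν with ν ≥ 1, let K be a field containing F_q and an element s transcendental over F_q, set t := s^r, and let L be a separable closure of K. Write ψ := D_s, C := D_t, and let Φ : F_q[X] → End_{F_q}(L) be the F_q-algebra homomorphism Φ(a) := ψ(â)^r (the endomorphism realization of the rank-r Drinfeld module with Φ_X = (t^{1/r} + τ)^r). Let π ∈ F_q[X] be monic irreducible of degree d, and let i ≥ 0 be an integer with i·r ≡ 1 (mod q^d − 1). For 0 ≤ k ≤ r put V_k := {λ ∈ L : ψ(π̂)^k(λ) = 0}. Then: (a) 0 = V_0 ⊆ V_1 ⊆ ⋯ ⊆ V_r = {λ ∈ L : Φ(π)(λ) = 0}; (b) each V_k is an F_q-subspace of L of dimension k·d, stable under every field automorphism of L fixing K pointwise; (c) for every field automorphism σ of L fixing K pointwise, every λ ∈ V_1, and every a ∈ F_q[X] such that σ(δ) = C(a)(δ) holds for all δ ∈ L with C(π)(δ) = 0, one has σ(λ) = ψ(â)^{i·r}(λ). (This expresses that the mod π Galois representation attached to Φ is upper triangular with all diagonal characters equal to the i-th power of the mod π Carlitz character.) -/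

import Mathlib

section AuxLemmas

open Polynomial

/-- The additive polynomial representing the `k`-th iterate of `x ↦ u·x + x^q`. -/
noncomputable def auxPn {L : Type} [Field L] (u : L) (q : ℕ) : ℕ → Polynomial L
  | 0 => X
  | (k+1) => C u * auxPn u q k + (auxPn u q k) ^ q

lemma auxPn_monic_natDegree {L : Type} [Field L] (u : L) (q : ℕ) (hq : 2 ≤ q) (k : ℕ) :
    (auxPn u q k).Monic ∧ (auxPn u q k).natDegree = q ^ k := by
  induction k with
  | zero => exact ⟨monic_X, natDegree_X⟩
  | succ k ih =>
    obtain ⟨hm, hd⟩ := ih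
    have hmq : ((auxPn u q k) ^ q).Monic := hm.pow q
    have hdq : ((auxPn u q k) ^ q).natDegree = q ^ (k+1) := by
      rw [natDegree_pow, hd, pow_succ, Nat.mul_comm]
    have hlt : (C u * auxPn u q k).natDegree < ((auxPn u q k) ^ q).natDegree := by
      calc (C u * auxPn u q k).natDegree ≤ (auxPn u q k).natDegree := natDegree_C_mul_le u _
      _ = q ^ k := hd
      _ < q ^ (k+1) := Nat.pow_lt_pow_succ (by omega)
      _ = _ := hdq.symm
    constructor
    · exact hmq.add_of_right (degree_lt_degree hlt)
    · show (C u * auxPn u q k + (auxPn u q k) ^ q).natDegree = q ^ (k+1)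
      rw [natDegree_add_eq_right_of_natDegree_lt hlt, hdq]

lemma auxPn_derivative {L : Type} [Field L] (p : ℕ) [CharP L p] (u : L) (q : ℕ)
    (hq : (q : L) = 0) (k : ℕ) :
    derivative (auxPn u q k) = C (u ^ k) := by
  induction k with
  | zero => simp [auxPn]
  | succ k ih =>
    show derivative (C u * auxPn u q k + (auxPn u q k) ^ q) = _
    rw [derivative_add, derivative_C_mul, ih, derivative_pow]
    simp [hq, pow_succ, mul_comm]

section
variable {Fq L : Type} [Field Fq] [Fintype Fq] [Field L] [Algebra Fq L]
  (u : L) (ψ : Polynomial Fq →ₐ[Fq] Module.End Fq L)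

lemma auxPn_eval (hψ : ∀ x : L, ψ Polynomial.X x = u * x + x ^ Fintype.card Fq)
    (k : ℕ) (x : L) :
    (ψ Polynomial.X ^ k) x = (auxPn u (Fintype.card Fq) k).eval x := by
  induction k with
  | zero => simp [auxPn]
  | succ k ih =>
    rw [pow_succ', Module.End.mul_apply, hψ, ih]
    show _ = eval x (C u * auxPn u (Fintype.card Fq) k
      + (auxPn u (Fintype.card Fq) k) ^ (Fintype.card Fq))
    simp

omit [Fintype Fq] in
lemma psi_C_apply (c : Fq) (x : L) : ψ (C c) x = algebraMap Fq L c * x := by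
  have : (C c : Polynomial Fq) = algebraMap Fq (Polynomial Fq) c := rfl
  rw [this, AlgHom.commutes, Module.algebraMap_end_apply, Algebra.smul_def]

/-- The additive polynomial representing `ψ a`. -/
noncomputable def auxQ (a : Polynomial Fq) : Polynomial L :=
  a.sum fun k c => C (algebraMap Fq L c) * auxPn u (Fintype.card Fq) k

lemma auxQ_eval (hψ : ∀ x : L, ψ Polynomial.X x = u * x + x ^ Fintype.card Fq)
    (a : Polynomial Fq) (x : L) :
    ψ a x = (auxQ u a).eval x := by
  conv_lhs => rw [← Polynomial.sum_C_mul_X_pow_eq a]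
  rw [Polynomial.sum, auxQ, Polynomial.sum, map_sum, eval_finset_sum]
  rw [LinearMap.coe_sum, Finset.sum_apply]
  refine Finset.sum_congr rfl fun k hk => ?_
  rw [map_mul, map_pow, Module.End.mul_apply, eval_mul, eval_C,
    psi_C_apply, auxPn_eval u ψ hψ]

lemma auxQ_derivative (p : ℕ) [CharP L p] (hq : ((Fintype.card Fq : ℕ) : L) = 0)
    (a : Polynomial Fq) :
    derivative (auxQ u a) = C (aeval u a) := by
  rw [auxQ, Polynomial.sum, derivative_sum]
  have : (aeval u a : L) = a.sum fun k c => algebraMap Fq L c * u ^ k := by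
    rw [aeval_def, eval₂_eq_sum]
  rw [this, Polynomial.sum, map_sum]
  refine Finset.sum_congr rfl fun k hk => ?_
  rw [derivative_C_mul, auxPn_derivative p u _ hq, ← C_mul]

lemma auxQ_natDegree (hq2 : 2 ≤ Fintype.card Fq) (a : Polynomial Fq) (ha : a ≠ 0) :
    (auxQ u a).natDegree = Fintype.card Fq ^ a.natDegree ∧ auxQ u a ≠ 0 := by
  set q := Fintype.card Fq
  set N := a.natDegree
  have hNmem : N ∈ a.support := natDegree_mem_support_of_nonzero ha
  have hcN : algebraMap Fq L (a.coeff N) ≠ 0 :=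
    (map_ne_zero (algebraMap Fq L)).mpr (mem_support_iff.mp hNmem)
  have hPm := auxPn_monic_natDegree u q hq2
  have hmain : (C (algebraMap Fq L (a.coeff N)) * auxPn u q N).natDegree = q ^ N := by
    rw [natDegree_C_mul hcN, (hPm N).2]
  have hrest : (∑ k ∈ a.support.erase N,
      C (algebraMap Fq L (a.coeff k)) * auxPn u q k).natDegree < q ^ N := by
    have hN1 : 1 ≤ q ^ N := Nat.one_le_pow _ _ (by omega)
    refine lt_of_le_of_lt (natDegree_sum_le_of_forall_le _ _ fun k hk => ?_)
      (by omega : q ^ N - 1 < q ^ N)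
    have hkN : k < N := lt_of_le_of_ne (le_natDegree_of_mem_supp k (Finset.mem_of_mem_erase hk))
      (Finset.ne_of_mem_erase hk)
    have : q ^ k < q ^ N := Nat.pow_lt_pow_right (by omega) hkN
    calc (C (algebraMap Fq L (a.coeff k)) * auxPn u q k).natDegree
        ≤ (auxPn u q k).natDegree := natDegree_C_mul_le _ _
      _ = q ^ k := (hPm k).2
      _ ≤ q ^ N - 1 := by omega
  have hsum : auxQ u a = C (algebraMap Fq L (a.coeff N)) * auxPn u q N
      + ∑ k ∈ a.support.erase N, C (algebraMap Fq L (a.coeff k)) * auxPn u q k := by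
    rw [auxQ, Polynomial.sum, ← Finset.add_sum_erase _ _ hNmem]
  constructor
  · rw [hsum, natDegree_add_eq_left_of_natDegree_lt (by omega), hmain]
  · rw [hsum]
    intro h0
    have := natDegree_add_eq_left_of_natDegree_lt (hmain ▸ hrest)
    rw [h0, natDegree_zero, hmain] at this
    have : 1 ≤ q ^ N := Nat.one_le_pow _ _ (by omega)
    omega

/-- Key counting lemma: the kernel of `ψ a` on a separably closed field has exactly
`q ^ deg a` elements, when the associated additive polynomial is separable. -/
lemma aux_ker_card (hψ : ∀ x : L, ψ Polynomial.X x = u * x + x ^ Fintype.card Fq)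
    (p : ℕ) [CharP L p] [IsSepClosed L]
    (hq0 : ((Fintype.card Fq : ℕ) : L) = 0) (hq2 : 2 ≤ Fintype.card Fq)
    (hu : ∀ b : Polynomial Fq, b ≠ 0 → aeval u b ≠ 0)
    (a : Polynomial Fq) (ha : a ≠ 0) :
    Nat.card (LinearMap.ker (ψ a)) = Fintype.card Fq ^ a.natDegree := by
  set Q : Polynomial L := auxQ u a with hQdef
  have hder : derivative Q = C (aeval u a) := auxQ_derivative u p hq0 a
  have hc : (aeval u a : L) ≠ 0 := hu a ha
  have hsep : Q.Separable := by
    rw [Separable, hder]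
    exact ⟨0, C (aeval u a)⁻¹, by rw [zero_mul, zero_add, ← C_mul, inv_mul_cancel₀ hc, C_1]⟩
  have hsplits : (Q.map (algebraMap L L)).Splits := by
    rw [Algebra.algebraMap_self]
    exact IsSepClosed.splits_codomain Q hsep
  have hcard : Fintype.card (Q.rootSet L) = Q.natDegree :=
    card_rootSet_eq_natDegree hsep hsplits
  have hQdeg := auxQ_natDegree u hq2 a ha
  have hset : (LinearMap.ker (ψ a) : Set L) = Q.rootSet L := by
    ext x
    simp only [SetLike.mem_coe, LinearMap.mem_ker, mem_rootSet', Polynomial.map_id,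
      Algebra.algebraMap_self, coe_aeval_eq_eval, auxQ_eval u ψ hψ a x, ← hQdef]
    exact (and_iff_right hQdeg.2).symm
  have : Nat.card (LinearMap.ker (ψ a)) = Nat.card (Q.rootSet L) :=
    Nat.card_congr (Equiv.setCongr hset)
  rw [this, Nat.card_eq_fintype_card, hcard, hQdeg.1]

end

lemma aux_finrank {Fq M : Type} [Field Fq] [Fintype Fq] [AddCommGroup M] [Module Fq M]
    (W : Submodule Fq M) (n : ℕ) (hq2 : 2 ≤ Fintype.card Fq)
    (h : Nat.card W = Fintype.card Fq ^ n) : Module.finrank Fq W = n := by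
  have hpos : 0 < Nat.card W := h ▸ Nat.pow_pos (n := n) (by omega)
  have : Finite W := (Nat.card_pos_iff.mp hpos).2
  have := Fintype.ofFinite W
  rw [Nat.card_eq_fintype_card, Module.card_eq_pow_finrank (K := Fq) (V := W)] at h
  exact Nat.pow_right_injective hq2 h

lemma aux_two {α : Type} (h2 : Nat.card α = 2) (a b c : α) (hac : a ≠ c) (hbc : b ≠ c) :
    a = b := by
  classical
  have : Finite α := (Nat.card_pos_iff.mp (by omega)).2
  have := Fintype.ofFinite α
  rw [Nat.card_eq_fintype_card] at h2
  by_contra hab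
  have h3 : ({a, b, c} : Finset α).card = 3 := by
    rw [Finset.card_insert_of_notMem (by simp [hab, hac]),
      Finset.card_insert_of_notMem (by simp [hbc]), Finset.card_singleton]
  have := Finset.card_le_univ ({a, b, c} : Finset α)
  omega

/-- Every polynomial `b` satisfies `b ^ (q ^ deg f) ≡ b` modulo an irreducible `f`. -/
lemma aux_dvd_pow_card {Fq : Type} [Field Fq] [Fintype Fq] (f : Polynomial Fq)
    (hf : Irreducible f) (b : Polynomial Fq) :
    f ∣ b ^ (Fintype.card Fq ^ f.natDegree) - b := by
  haveI : Fact (Irreducible f) := ⟨hf⟩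
  have hf0 : f ≠ 0 := hf.ne_zero
  let pb := AdjoinRoot.powerBasis hf0
  haveI : Module.Finite Fq (AdjoinRoot f) := pb.finite
  haveI : Finite (AdjoinRoot f) := Module.finite_of_finite Fq
  haveI := Fintype.ofFinite (AdjoinRoot f)
  have hcard : Fintype.card (AdjoinRoot f) = Fintype.card Fq ^ f.natDegree := by
    rw [Module.card_eq_pow_finrank (K := Fq) (V := AdjoinRoot f), pb.finrank,
      AdjoinRoot.powerBasis_dim]
  rw [← AdjoinRoot.mk_eq_zero, map_sub, map_pow, ← hcard, FiniteField.pow_card, sub_self]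

section
variable {Fq K L : Type} [Field Fq] [Fintype Fq] [Field K] [Algebra Fq K]
  [Field L] [Algebra Fq L] [Algebra K L] [IsScalarTower Fq K L]
  (ψ : Polynomial Fq →ₐ[Fq] Module.End Fq L) (s : K)

/-- Galois elements over `K` commute with `ψ a`. -/
lemma aux_comm (hψ : ∀ x : L, ψ X x = algebraMap K L s * x + x ^ Fintype.card Fq)
    (σ : L ≃ₐ[K] L) (a : Polynomial Fq) (x : L) : σ (ψ a x) = ψ a (σ x) := by
  have halg : ∀ c : Fq, σ (algebraMap Fq L c) = algebraMap Fq L c := fun c => by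
    rw [IsScalarTower.algebraMap_apply Fq K L, σ.commutes]
  have hX : ∀ y : L, σ (ψ X y) = ψ X (σ y) := fun y => by
    rw [hψ, map_add, map_mul, map_pow, σ.commutes, hψ]
  induction a using Polynomial.induction_on generalizing x with
  | C c => rw [psi_C_apply, psi_C_apply, map_mul, halg]
  | add f g hf hg => rw [map_add, LinearMap.add_apply, map_add, hf, hg, LinearMap.add_apply]
  | monomial n c ih =>
    have he : (C c * X ^ (n + 1) : Polynomial Fq) = (C c * X ^ n) * X := by ring
    rw [he, map_mul, Module.End.mul_apply, Module.End.mul_apply, ih, hX]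

/-- The `p^ν`-power Frobenius intertwines `ψ` (built from `s`) and `C'` (built from `s^(p^ν)`). -/
lemma aux_frob (p ν : ℕ) [CharP L p] [Fact p.Prime]
    (C' : Polynomial Fq →ₐ[Fq] Module.End Fq L)
    (hψ : ∀ x : L, ψ X x = algebraMap K L s * x + x ^ Fintype.card Fq)
    (hC : ∀ x : L, C' X x = algebraMap K L (s ^ p ^ ν) * x + x ^ Fintype.card Fq)
    (φ : Fq →+* Fq) (hφ : ∀ c : Fq, φ c = c ^ p ^ ν)
    (a : Polynomial Fq) (x : L) :
    (ψ a x) ^ p ^ ν = C' (a.map φ) (x ^ p ^ ν) := by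
  have hX : ∀ y : L, (ψ X y) ^ p ^ ν = C' X (y ^ p ^ ν) := fun y => by
    rw [hψ, hC, add_pow_char_pow, mul_pow, ← map_pow, ← pow_mul, ← pow_mul,
      Nat.mul_comm]
  induction a using Polynomial.induction_on generalizing x with
  | C c =>
    rw [psi_C_apply, map_C, psi_C_apply C', hφ, mul_pow, map_pow]
  | add f g hf hg =>
    rw [map_add, LinearMap.add_apply, add_pow_char_pow, hf, hg, Polynomial.map_add,
      map_add, LinearMap.add_apply]
  | monomial n c ih =>
    have he : (C c * X ^ (n + 1) : Polynomial Fq) = (C c * X ^ n) * X := by ring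
    rw [he]
    conv_rhs => rw [Polynomial.map_mul, Polynomial.map_X, map_mul, Module.End.mul_apply]
    rw [map_mul, Module.End.mul_apply, ih, hX]

end

end AuxLemmas

/-- Let `r = p^ν` (`ν ≥ 1`), `K` a field containing `F_q` and `s`
transcendental over `F_q`, `t := s^r`, and `L` a separable closure of `K`. Let `ψ := D_s`,
`C := D_t`, and `Φ(a) := ψ(â)^r` (the rank-`r` Drinfeld module `Φ_X = (t^{1/r} + τ)^r`).
Let `π ∈ F_q[X]` be monic irreducible of degree `d` and `i ≥ 0` with
`i·r ≡ 1 (mod q^d − 1)`. With `V_k := ker ψ(π̂)^k`: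
(a) `0 = V_0 ⊆ V_1 ⊆ ⋯ ⊆ V_r = {λ : Φ(π)(λ) = 0}`;
(b) each `V_k` is an `F_q`-subspace of dimension `k·d`, stable under `Gal(L/K)`;
(c) every `σ ∈ Gal(L/K)` acting on Carlitz `π`-torsion through `a` satisfies
`σ(λ) = ψ(â)^{i·r}(λ)` for all `λ ∈ V_1`. -/
theorem twisted_carlitz_power_mod_pi_representation
    (p m ν : ℕ) (hp : p.Prime) (hm : 0 < m) (hν : 1 ≤ ν)
    (Fq : Type) [Field Fq] [Fintype Fq] (hq : Fintype.card Fq = p ^ m)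
    (K : Type) [Field K] [Algebra Fq K] (s : K) (hs : Transcendental Fq s)
    (L : Type) [Field L] [Algebra Fq L] [Algebra K L] [IsScalarTower Fq K L]
    [IsSepClosure K L]
    (ψ C : Polynomial Fq →ₐ[Fq] Module.End Fq L)
    (hψ : ∀ x : L, ψ Polynomial.X x = algebraMap K L s * x + x ^ Fintype.card Fq)
    (hC : ∀ x : L,
      C Polynomial.X x = algebraMap K L (s ^ p ^ ν) * x + x ^ Fintype.card Fq)
    (hat : Polynomial Fq → Polynomial Fq)
    (hhat : ∀ (a : Polynomial Fq) (k : ℕ), (hat a).coeff k ^ p ^ ν = a.coeff k)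
    (π : Polynomial Fq) (hπmonic : π.Monic) (hπirr : Irreducible π)
    (i : ℕ) (hi : i * p ^ ν ≡ 1 [MOD Fintype.card Fq ^ π.natDegree - 1]) :
    let Φ : Polynomial Fq → Module.End Fq L := fun a => ψ (hat a) ^ p ^ ν
    -- (a) the filtration
    ({lam : L | (ψ (hat π) ^ 0) lam = 0} = {0} ∧
      (∀ k : ℕ, k < p ^ ν →
        {lam : L | (ψ (hat π) ^ k) lam = 0} ⊆ {lam : L | (ψ (hat π) ^ (k + 1)) lam = 0}) ∧
      {lam : L | (ψ (hat π) ^ p ^ ν) lam = 0} = {lam : L | Φ π lam = 0}) ∧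
    -- (b) each V_k is an F_q-subspace of dimension k·d, stable under Gal(L/K)
    (∀ k : ℕ, k ≤ p ^ ν →
      (∃ W : Submodule Fq L, (W : Set L) = {lam : L | (ψ (hat π) ^ k) lam = 0} ∧
        Module.finrank Fq W = k * π.natDegree) ∧
      (∀ σ : L ≃ₐ[K] L, ∀ lam : L, (ψ (hat π) ^ k) lam = 0 →
        (ψ (hat π) ^ k) (σ lam) = 0)) ∧
    -- (c) the diagonal characters are the i-th power of the mod π Carlitz character
    (∀ σ : L ≃ₐ[K] L, ∀ lam : L, ψ (hat π) lam = 0 →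
      ∀ a : Polynomial Fq, (∀ δ : L, C π δ = 0 → σ δ = C a δ) →
        σ lam = (ψ (hat a) ^ (i * p ^ ν)) lam) := by
  intro Φ
  have hq2 : 2 ≤ Fintype.card Fq := Fintype.one_lt_card
  -- characteristic
  obtain ⟨n, hcp, hcard⟩ := FiniteField.card Fq (ringChar Fq)
  have hpc : p = ringChar Fq := by
    have hdvd : p ∣ ringChar Fq ^ (n : ℕ) := by
      rw [← hcard, hq]; exact dvd_pow_self p (by omega)
    exact (Nat.prime_dvd_prime_iff_eq hp hcp).mp (hp.dvd_of_dvd_pow hdvd)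
  haveI : CharP Fq p := by rw [hpc]; exact ringChar.charP Fq
  haveI : Fact p.Prime := ⟨hp⟩
  haveI : CharP L p := charP_of_injective_algebraMap (algebraMap Fq L).injective p
  haveI : IsSepClosed L := IsSepClosure.sep_closed K
  have hr0 : p ^ ν ≠ 0 := (pow_pos hp.pos ν).ne'
  have hq0 : ((Fintype.card Fq : ℕ) : L) = 0 := by
    rw [hq, Nat.cast_pow, CharP.cast_eq_zero, zero_pow (by omega : m ≠ 0)]
  -- the Frobenius twist on coefficients
  set φ : Fq →+* Fq := iterateFrobenius Fq p ν with hφdef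
  have hφ : ∀ c : Fq, φ c = c ^ p ^ ν := fun c => iterateFrobenius_def (p := p) (n := ν) (x := c)
  have hmap : ∀ b : Polynomial Fq, (hat b).map φ = b := fun b => by
    ext k; rw [Polynomial.coeff_map, hφ, hhat]
  have hπ0 : π ≠ 0 := hπirr.ne_zero
  have hhatπ0 : hat π ≠ 0 := fun h => hπ0 (by rw [← hmap π, h, Polynomial.map_zero])
  have hdeg : (hat π).natDegree = π.natDegree := by
    conv_rhs => rw [← hmap π]
    exact (Polynomial.natDegree_map_eq_of_injective φ.injective _).symm
  have hhatπirr : Irreducible (hat π) := by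
    have hbij : Function.Bijective φ := Finite.injective_iff_bijective.mp φ.injective
    set e : Fq ≃+* Fq := RingEquiv.ofBijective φ hbij with hedef
    have hee : ((e : Fq ≃+* Fq) : Fq →+* Fq) = φ := RingHom.ext fun x => rfl
    have hmape : Polynomial.mapEquiv e (hat π) = π := by
      rw [Polynomial.mapEquiv_apply, hee, hmap]
    exact (MulEquiv.irreducible_iff (Polynomial.mapEquiv e)).mp (by rw [hmape]; exact hπirr)
  have hs' := transcendental_iff.mp hs
  have hu1 : ∀ b : Polynomial Fq, b ≠ 0 → Polynomial.aeval (algebraMap K L s) b ≠ 0 := by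
    intro b hb
    rw [Polynomial.aeval_algebraMap_apply]
    exact (map_ne_zero _).mpr fun h => hb (hs' b h)
  -- kernel cardinalities
  have hker : ∀ k : ℕ, Nat.card (LinearMap.ker ((ψ (hat π)) ^ k))
      = Fintype.card Fq ^ (k * π.natDegree) := by
    intro k
    have h1 : (ψ (hat π)) ^ k = ψ ((hat π) ^ k) := (map_pow ψ _ k).symm
    rw [h1, aux_ker_card (algebraMap K L s) ψ hψ p hq0 hq2 hu1 _ (pow_ne_zero k hhatπ0),
      Polynomial.natDegree_pow, hdeg]
  refine ⟨⟨?_, ?_, rfl⟩, ?_, ?_⟩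
  · -- (a) V_0 = 0
    ext x
    simp only [Set.mem_setOf_eq, pow_zero, Module.End.one_apply, Set.mem_singleton_iff]
  · -- (a) filtration increases
    intro k _ lam hlam
    simp only [Set.mem_setOf_eq] at *
    rw [pow_succ', Module.End.mul_apply, hlam, map_zero]
  · -- (b)
    intro k _
    constructor
    · refine ⟨LinearMap.ker ((ψ (hat π)) ^ k), ?_, ?_⟩
      · ext x; simp [LinearMap.mem_ker]
      · exact aux_finrank _ _ hq2 (hker k)
    · intro σ lam hlam
      have h1 : (ψ (hat π)) ^ k = ψ ((hat π) ^ k) := (map_pow ψ _ k).symm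
      rw [h1] at hlam ⊢
      rw [← aux_comm ψ s hψ σ _ lam, hlam, map_zero]
  · -- (c)
    intro σ lam hlam a ha
    have hfrobπ := aux_frob ψ s p ν C hψ hC φ hφ (hat π) lam
    rw [hlam, hmap π, zero_pow hr0] at hfrobπ
    have h1 : C π (lam ^ p ^ ν) = 0 := hfrobπ.symm
    have hfroba := aux_frob ψ s p ν C hψ hC φ hφ (hat a) lam
    rw [hmap a] at hfroba
    have h2 : σ lam ^ p ^ ν = (ψ (hat a) lam) ^ p ^ ν := by
      rw [← map_pow, ha _ h1, hfroba]
    have h3 : σ lam = ψ (hat a) lam := by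
      have hsub := sub_pow_char_pow (x := σ lam) (y := ψ (hat a) lam) (p := p) (n := ν)
      rw [h2, sub_self] at hsub
      exact sub_eq_zero.mp ((pow_eq_zero_iff hr0).mp hsub)
    set Qd := Fintype.card Fq ^ π.natDegree with hQd
    have hd1 : 1 ≤ π.natDegree := hπirr.natDegree_pos
    have hQd2 : 2 ≤ Qd := by
      have hle : Fintype.card Fq ≤ Qd := Nat.le_self_pow (by omega) _
      omega
    have hdvd : hat π ∣ (hat a) ^ Qd - hat a := by
      have := aux_dvd_pow_card (hat π) hhatπirr (hat a)
      rwa [hdeg] at this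
    obtain ⟨w, hw⟩ := hdvd
    have hfix : ((ψ (hat a)) ^ Qd) lam = ψ (hat a) lam := by
      have he : (hat a) ^ Qd = hat a + w * hat π := by linear_combination hw
      rw [← map_pow, he, map_add, LinearMap.add_apply, map_mul, Module.End.mul_apply,
        hlam, map_zero, add_zero]
    by_cases hn0 : i * p ^ ν = 0
    · -- degenerate case: forces q^d = 2
      have hQdeq : Qd - 1 = 1 := by
        have h01 : (0 : ℕ) ≡ 1 [MOD Qd - 1] := hn0 ▸ hi
        have := (Nat.modEq_iff_dvd' (by omega : 0 ≤ 1)).mp h01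
        simpa [Nat.dvd_one] using this
      rw [hn0, pow_zero, Module.End.one_apply]
      by_cases hfl : ψ (hat a) lam = 0
      · have hσ0 : σ lam = 0 := by rw [h3, hfl]
        have hl0 : lam = 0 := by
          apply σ.injective; rw [hσ0, map_zero]
        rw [hσ0, hl0]
      · have hlam0 : lam ≠ 0 := fun h => hfl (by rw [h, map_zero])
        have hmem1 : lam ∈ LinearMap.ker (ψ (hat π)) := LinearMap.mem_ker.mpr hlam
        have hmem2 : ψ (hat a) lam ∈ LinearMap.ker (ψ (hat π)) := by
          rw [LinearMap.mem_ker, ← Module.End.mul_apply, ← map_mul, mul_comm, map_mul,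
            Module.End.mul_apply, hlam, map_zero]
        have hcard2 : Nat.card (LinearMap.ker (ψ (hat π))) = 2 := by
          have := hker 1
          rw [pow_one, one_mul] at this
          rw [this]; omega
        have heq := aux_two hcard2 (⟨lam, hmem1⟩ : LinearMap.ker (ψ (hat π)))
          ⟨ψ (hat a) lam, hmem2⟩ 0
          (fun h => hlam0 (congrArg Subtype.val h))
          (fun h => hfl (congrArg Subtype.val h))
        have heq' : lam = ψ (hat a) lam := congrArg Subtype.val heq
        rw [h3, ← heq']
    · -- main case
      have h1le : 1 ≤ i * p ^ ν := by omega
      have hdvd1 : (Qd - 1) ∣ (i * p ^ ν - 1) := (Nat.modEq_iff_dvd' h1le).mp hi.symm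
      obtain ⟨l, hl⟩ := hdvd1
      have hexp : i * p ^ ν = 1 + (Qd - 1) * l := by omega
      have hclaim : ∀ l' : ℕ, ((ψ (hat a)) ^ (1 + (Qd - 1) * l')) lam = ψ (hat a) lam := by
        intro l'
        induction l' with
        | zero => rw [Nat.mul_zero, Nat.add_zero, pow_one]
        | succ l'' ih =>
          have he2 : 1 + (Qd - 1) * (l'' + 1) = (Qd - 1) + (1 + (Qd - 1) * l'') := by ring
          rw [he2, pow_add, Module.End.mul_apply, ih, ← Module.End.mul_apply, ← pow_succ]
          have hqd1 : Qd - 1 + 1 = Qd := by omega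
          rw [hqd1, hfix]
      rw [hexp, hclaim l]
      exact h3
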